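/- arXiv:math/0411249 — 2 statements merged into one kernel-verified Lean document; each statement's English description precedes it below -/
import Mathlib

section
/- Let 0 < q < 1, 0 < a < q^{-1}, 0 < b < q^{-1} and c < 0. Then for all n, n' ∈ ℕ the series below converges absolutely and the two dual families of big q-Jacobi polynomials are mutually orthogonal: Σ_{m=0}^{∞} (−1)^m · [(1−abq^{2m+1}) (abq;q)_m] / [(1−abq) (q;q)_m] · q^{m(m−1)/2} · D_n(μ(m);a,b,c|q) · D_{n'}(μ(m);b,a,ab/c|q) = 0. -/
open scoped BigOperators

/-- The q-shifted factorial `(a;q)_k`. -/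
noncomputable def qPoch (q a : ℝ) (k : ℕ) : ℝ :=
  ∏ j ∈ Finset.range k, (1 - a * q ^ j)

/-- The dual big q-Jacobi polynomials `D_n(μ(m);a,b,c|q)`,
`μ(m) = q^{-m} + a b q^{m+1}`. -/
noncomputable def dualBigQJacobi (q a b c : ℝ) (n m : ℕ) : ℝ :=
  ∑ k ∈ Finset.range (n + 1),
    qPoch q (q ^ (-(m : ℤ))) k * qPoch q (a * b * q ^ (m + 1)) k *
        qPoch q (q ^ (-(n : ℤ))) k /
      (qPoch q (a * q) k * qPoch q (a * b * q / c) k * qPoch q q k) *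
      (a * q ^ (n + 1) / c) ^ k


lemma qPoch_zero (q x : ℝ) : qPoch q x 0 = 1 := by simp [qPoch]

lemma qPoch_succ (q x : ℝ) (k : ℕ) :
    qPoch q x (k + 1) = qPoch q x k * (1 - x * q ^ k) := by
  simp [qPoch, Finset.prod_range_succ]

lemma qPoch_add (q x : ℝ) (k l : ℕ) :
    qPoch q x (k + l) = qPoch q x k * qPoch q (x * q ^ k) l := by
  induction l with
  | zero => simp [qPoch]
  | succ l ih =>
      rw [← Nat.add_assoc, qPoch_succ, ih, qPoch_succ, mul_assoc, pow_add]
      ring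

lemma qPoch_shift (q x : ℝ) (k : ℕ) :
    qPoch q x (k + 1) = (1 - x) * qPoch q (x * q) k := by
  have := qPoch_add q x 1 k
  simpa [qPoch_succ, qPoch_zero, Nat.add_comm 1 k] using this

lemma qPoch_pos (q x : ℝ) (hq0 : 0 < q) (hx : ∀ j : ℕ, x * q ^ j < 1) (k : ℕ) :
    0 < qPoch q x k := by
  apply Finset.prod_pos
  intro j _
  have := hx j
  linarith

lemma qPoch_q_pos (q : ℝ) (hq0 : 0 < q) (hq1 : q < 1) (k : ℕ) : 0 < qPoch q q k := by
  apply qPoch_pos q q hq0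
  intro j
  calc q * q ^ j < 1 * q ^ j := by
        exact mul_lt_mul_of_pos_right hq1 (pow_pos hq0 j)
    _ = q ^ j := by ring
    _ ≤ 1 := pow_le_one₀ (le_of_lt hq0) (le_of_lt hq1)

lemma tri_succ (j : ℕ) : (j + 1) * j / 2 = j * (j - 1) / 2 + j := by
  cases j with
  | zero => rfl
  | succ k =>
      have h : (k + 2) * (k + 1) = (k + 1) * k + (k + 1) * 2 := by ring
      simp only [Nat.succ_sub_one]
      rw [h, Nat.add_mul_div_right _ _ (by norm_num : 0 < 2)]

lemma tri_add (x y : ℕ) :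
    (x + y) * (x + y - 1) / 2 = x * (x - 1) / 2 + y * (y - 1) / 2 + x * y := by
  induction y with
  | zero => simp
  | succ k ih =>
      have h1 : x + (k + 1) = (x + k) + 1 := by omega
      rw [h1, show ((x+k)+1) * ((x+k)+1-1) / 2 = ((x+k)+1)*(x+k)/2 from rfl, tri_succ,
        ih, show (k+1)*(k+1-1)/2 = (k+1)*k/2 from rfl, tri_succ]
      generalize x * (x-1)/2 = A
      generalize k * (k-1)/2 = B
      ring

lemma sq_tri (j : ℕ) : j * j = j * (j - 1) / 2 + j * (j - 1) / 2 + j := by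
  cases j with
  | zero => rfl
  | succ k =>
      simp only [Nat.succ_sub_one]
      have hev : Even ((k+1) * k) := by
        rw [Nat.mul_comm]; exact Nat.even_mul_succ_self k
      have h2 : 2 * ((k+1) * k / 2) = (k+1) * k := Nat.two_mul_div_two_of_even hev
      nlinarith [h2]

lemma qPoch_inv (q : ℝ) (hq0 : 0 < q) (hq1 : q < 1) (m : ℕ) :
    ∀ j : ℕ, j ≤ m →
    qPoch q ((q ^ m)⁻¹) j =
      (-1) ^ j * q ^ (j * (j - 1) / 2) * qPoch q q m / (qPoch q q (m - j) * q ^ (m * j)) := by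
  intro j
  induction j with
  | zero =>
      intro _
      have h := (qPoch_q_pos q hq0 hq1 m).ne'
      simp [qPoch_zero, h]
  | succ j ih =>
      intro hjm
      have hj : j ≤ m := by omega
      have hqm : (q : ℝ) ^ m ≠ 0 := by positivity
      have hqj : (q : ℝ) ^ j ≠ 0 := by positivity
      have hP1 : qPoch q q (m - j) ≠ 0 := (qPoch_q_pos q hq0 hq1 _).ne'
      have hP2 : qPoch q q (m - (j+1)) ≠ 0 := (qPoch_q_pos q hq0 hq1 _).ne'
      have hsplit : qPoch q q (m - j) = qPoch q q (m - (j+1)) * (1 - q * q ^ (m - (j+1))) := by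
        have : m - j = (m - (j+1)) + 1 := by omega
        rw [this, qPoch_succ]
      have hpow : q * q ^ (m - (j+1)) = q ^ m * ((q ^ j)⁻¹ * q⁻¹ * q) := by
        have h1 : q ^ (m - (j + 1)) = q ^ m * (q ^ (j+1))⁻¹ := pow_sub₀ q (by positivity) hjm
        rw [h1, pow_succ]
        field_simp
      have hone : (0:ℝ) < 1 - q * q ^ (m - (j+1)) := by
        have : q * q ^ (m - (j+1)) = q ^ (m - (j+1) + 1) := by rw [pow_succ]; ring
        rw [this]
        have := pow_lt_one₀ (le_of_lt hq0) hq1 (n := m - (j+1) + 1) (by omega)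
        linarith
      have hfac : (1 - (q ^ m)⁻¹ * q ^ j) = -(q ^ j * (q ^ m)⁻¹) * (1 - q * q ^ (m - (j+1))) := by
        rw [hpow]
        field_simp
        ring
      rw [qPoch_succ, ih hj, show j + 1 - 1 = j from rfl, tri_succ, pow_add,
        show m * (j + 1) = m * j + m by ring, pow_add, hsplit, hfac, pow_succ]
      field_simp
      ring

noncomputable def auxW (q a b : ℝ) (m : ℕ) : ℝ :=
  (-1) ^ m * ((1 - a * b * q ^ (2 * m + 1)) * qPoch q (a * b * q) m /
    ((1 - a * b * q) * qPoch q q m)) * q ^ (m * (m - 1) / 2)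

noncomputable def auxB (q a b : ℝ) (j m : ℕ) : ℝ :=
  qPoch q (q ^ (-(m : ℤ))) j * qPoch q (a * b * q ^ (m + 1)) j

lemma auxCF (q a b : ℝ) (hq0 : 0 < q) (hq1 : q < 1) (hα : a * b * q ≠ 1) (j s : ℕ) :
    auxW q a b (j + s) * auxB q a b j (j + s) * ((1 - a * b * q) * qPoch q q s * q ^ j)
      = (-1) ^ s * q ^ (s * (s - 1) / 2) * (1 - a * b * q ^ (2 * (j + s) + 1)) *
        qPoch q (a * b * q) (2 * j + s) := by
  have hzpow : (q : ℝ) ^ (-((j + s : ℕ) : ℤ)) = (q ^ (j + s))⁻¹ := by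
    rw [zpow_neg, zpow_natCast]
  have hQm : qPoch q q (j + s) ≠ 0 := (qPoch_q_pos q hq0 hq1 _).ne'
  have hQs : qPoch q q s ≠ 0 := (qPoch_q_pos q hq0 hq1 _).ne'
  have hα' : (1 : ℝ) - a * b * q ≠ 0 := sub_ne_zero.mpr (fun h => hα h.symm)
  have hq : q ≠ 0 := hq0.ne'
  rw [auxW, auxB, hzpow, qPoch_inv q hq0 hq1 (j + s) j (Nat.le_add_right j s),
    Nat.add_sub_cancel_left, show 2 * j + s = (j + s) + j by omega, qPoch_add q (a*b*q) (j+s) j,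
    show a * b * q * q ^ (j + s) = a * b * q ^ ((j + s) + 1) by rw [pow_succ]; ring,
    tri_add j s,
    show (j + s) * j = j * (j - 1) / 2 + j * (j - 1) / 2 + j + s * j by
      rw [show (j + s) * j = j * j + s * j by ring, sq_tri j]]
  simp only [pow_add]
  rcases Nat.even_or_odd j with hj | hj
  · simp only [hj.neg_one_pow]
    field_simp
    ring
  · simp only [hj.neg_one_pow]
    field_simp
    ring

noncomputable def auxG (q a b : ℝ) (j s : ℕ) : ℝ :=
  (-1) ^ s * q ^ (s * (s + 1) / 2) * qPoch q (a * b * q * q) (2 * j + s) /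
    (q ^ j * qPoch q q s)

noncomputable def auxH (q a b : ℝ) (j m : ℕ) : ℝ :=
  if j + 1 ≤ m then auxG q a b j (m - (j + 1)) else 0

lemma tri2 (s : ℕ) : (s + 1) * (s + 1 + 1) / 2 = s * (s + 1) / 2 + (s + 1) := by
  rw [Nat.mul_comm (s+1) (s+1+1)]
  have h := tri_succ (s + 1)
  simpa [Nat.mul_comm] using h

lemma auxH_ge (q a b : ℝ) (j s : ℕ) : auxH q a b j (j + 1 + s) = auxG q a b j s := by
  rw [auxH, if_pos (by omega), show j + 1 + s - (j + 1) = s by omega]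

lemma auxH_le (q a b : ℝ) (j m : ℕ) (h : m ≤ j) : auxH q a b j m = 0 := by
  rw [auxH, if_neg (by omega)]

section
variable (q a b : ℝ) (hq0 : 0 < q) (hq1 : q < 1) (hα : a * b * q ≠ 1)

include hq0 hq1 hα in
lemma auxT (j : ℕ) : ∀ m : ℕ,
    auxW q a b m * auxB q a b j m = auxH q a b j (m + 1) - auxH q a b j m := by
  have hq : q ≠ 0 := hq0.ne'
  have hα' : (1 : ℝ) - a * b * q ≠ 0 := sub_ne_zero.mpr (fun h => hα h.symm)
  intro m
  rcases Nat.lt_or_ge m j with hmj | hmj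
  · -- m < j : everything vanishes
    rw [auxH_le _ _ _ _ _ (by omega), auxH_le _ _ _ _ _ (by omega)]
    have hB : auxB q a b j m = 0 := by
      rw [auxB]
      have : qPoch q (q ^ (-(m : ℤ))) j = 0 := by
        rw [qPoch]
        apply Finset.prod_eq_zero (Finset.mem_range.mpr hmj)
        rw [zpow_neg, zpow_natCast, inv_mul_cancel₀ (pow_ne_zero m hq)]
        ring
      rw [this]; ring
    rw [hB]; ring
  · obtain ⟨s, rfl⟩ : ∃ s, m = j + s := ⟨m - j, by omega⟩
    have hM : (1 - a * b * q) * qPoch q q s * q ^ j ≠ 0 := by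
      have := (qPoch_q_pos q hq0 hq1 s).ne'
      positivity
    apply mul_right_cancel₀ hM
    rw [auxCF q a b hq0 hq1 hα j s]
    cases s with
    | zero =>
        rw [show j + 0 + 1 = j + 1 + 0 by omega, auxH_ge, auxH_le _ _ _ _ _ (by omega), auxG]
        simp only [Nat.add_zero, pow_zero, one_mul, Nat.zero_mul, Nat.mul_zero, sub_zero,
          qPoch_zero]
        have h1 : qPoch q (a * b * q) (2 * j + 1) = qPoch q (a * b * q) (2 * j) *
            (1 - a * b * q ^ (2 * j + 1)) := by
          rw [qPoch_succ, show a * b * q ^ (2 * j + 1) = a * b * q * q ^ (2 * j) by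
            rw [pow_succ']; ring]
        have h2 : qPoch q (a * b * q) (2 * j + 1) = (1 - a * b * q) *
            qPoch q (a * b * q * q) (2 * j) := qPoch_shift q (a * b * q) (2 * j)
        have h3 : (1 - a * b * q ^ (2 * j + 1)) * qPoch q (a * b * q) (2 * j) =
            (1 - a * b * q) * qPoch q (a * b * q * q) (2 * j) := by
          rw [← h2, h1]; ring
        have hqj : (q:ℝ) ^ j ≠ 0 := pow_ne_zero j hq
        generalize qPoch q (a * b * q * q) (2 * j) = X at h3 ⊢
        generalize qPoch q (a * b * q) (2 * j) = Y at h3 ⊢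
        field_simp
        linear_combination h3
    | succ s =>
        rw [show j + (s + 1) = j + 1 + s by omega, show j + 1 + s + 1 = j + 1 + (s + 1) by omega,
          auxH_ge, auxH_ge, auxG, auxG]
        have hs : qPoch q q s ≠ 0 := (qPoch_q_pos q hq0 hq1 s).ne'
        have hs1 : qPoch q q (s + 1) ≠ 0 := (qPoch_q_pos q hq0 hq1 (s + 1)).ne'
        have e1 : qPoch q q (s + 1) = qPoch q q s * (1 - q * q ^ s) := qPoch_succ q q s
        have e2 : qPoch q (a * b * q * q) (2 * j + (s + 1)) =
            qPoch q (a * b * q * q) (2 * j + s) * (1 - a * b * q * q * q ^ (2 * j + s)) := by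
          rw [show 2 * j + (s + 1) = (2 * j + s) + 1 by omega, qPoch_succ]
        have e3 : qPoch q (a * b * q) (2 * j + (s + 1)) =
            (1 - a * b * q) * qPoch q (a * b * q * q) (2 * j + s) := by
          rw [show 2 * j + (s + 1) = (2 * j + s) + 1 by omega, qPoch_shift]
        have hone : (1 : ℝ) - q * q ^ s ≠ 0 := by
          have h1 : q * q ^ s = q ^ (s + 1) := by rw [pow_succ]; ring
          have h2 := pow_lt_one₀ (le_of_lt hq0) hq1 (n := s + 1) (by omega)
          rw [h1]; intro hcon; linarith
        rw [e2, e3, tri2, show (s + 1) * ((s + 1) - 1) / 2 = s * (s + 1) / 2 by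
          rw [Nat.mul_comm]; rfl, pow_add, e1]
        field_simp
        ring
end

section
variable (q a b : ℝ) (hq0 : 0 < q) (hq1 : q < 1) (hα : a * b * q ≠ 1)
  (hγ0 : 0 < a * b * q * q) (hγ1 : a * b * q * q < 1)

include hq0 hq1 in
lemma auxG_ratio (j s : ℕ) :
    auxG q a b j (s + 1) * (1 - q ^ (s + 1)) =
      -(q ^ (s + 1) * (1 - a * b * q * q * q ^ (2 * j + s))) * auxG q a b j s := by
  have hq : q ≠ 0 := hq0.ne'
  have hs : qPoch q q s ≠ 0 := (qPoch_q_pos q hq0 hq1 s).ne'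
  have hqj : (q:ℝ) ^ j ≠ 0 := pow_ne_zero j hq
  have hone : (1:ℝ) - q ^ (s + 1) ≠ 0 := by
    have := pow_lt_one₀ (le_of_lt hq0) hq1 (n := s + 1) (by omega)
    intro hcon; linarith
  rw [auxG, auxG, tri2, show 2 * j + (s + 1) = (2 * j + s) + 1 by omega, qPoch_succ,
    show qPoch q q (s + 1) = qPoch q q s * (1 - q ^ (s + 1)) by
      rw [qPoch_succ, pow_succ]; ring,
    pow_add, pow_succ]
  field_simp
  ring

include hq0 hq1 hγ0 hγ1 in
lemma auxG_norm_ratio (j s : ℕ) :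
    ‖auxG q a b j (s + 1)‖ ≤ (q ^ (s + 1) / (1 - q)) * ‖auxG q a b j s‖ := by
  have h1 : (0:ℝ) < 1 - q ^ (s + 1) := by
    have := pow_lt_one₀ (le_of_lt hq0) hq1 (n := s + 1) (by omega)
    linarith
  have h2 : (0:ℝ) ≤ 1 - a * b * q * q * q ^ (2 * j + s) := by
    have hle : a * b * q * q * q ^ (2 * j + s) ≤ a * b * q * q * 1 :=
      mul_le_mul_of_nonneg_left (pow_le_one₀ (le_of_lt hq0) (le_of_lt hq1)) (le_of_lt hγ0)
    linarith
  have h3 : a * b * q * q * q ^ (2 * j + s) ≥ 0 := by positivity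
  have heq := auxG_ratio q a b hq0 hq1 j s
  have habs : ‖auxG q a b j (s + 1)‖ * (1 - q ^ (s + 1)) =
      q ^ (s + 1) * (1 - a * b * q * q * q ^ (2 * j + s)) * ‖auxG q a b j s‖ := by
    have := congrArg (fun x : ℝ => |x|) heq
    simp only [abs_mul, abs_neg] at this
    rw [abs_of_pos h1, abs_of_nonneg (by positivity : (0:ℝ) ≤ q ^ (s+1)),
      abs_of_nonneg h2] at this
    simpa [Real.norm_eq_abs, mul_assoc] using this
  rw [div_mul_eq_mul_div, le_div_iff₀ (by linarith : (0:ℝ) < 1 - q)]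
  have hfa : ‖auxG q a b j (s + 1)‖ * (1 - q) ≤ ‖auxG q a b j (s + 1)‖ * (1 - q ^ (s + 1)) := by
    apply mul_le_mul_of_nonneg_left _ (norm_nonneg _)
    have : q ^ (s + 1) ≤ q := by
      calc q ^ (s + 1) = q ^ s * q := by rw [pow_succ]
        _ ≤ 1 * q := by
            apply mul_le_mul_of_nonneg_right (pow_le_one₀ (le_of_lt hq0) (le_of_lt hq1)) (le_of_lt hq0)
        _ = q := by ring
    linarith
  calc ‖auxG q a b j (s + 1)‖ * (1 - q) ≤ ‖auxG q a b j (s + 1)‖ * (1 - q ^ (s + 1)) := hfa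
    _ = q ^ (s + 1) * (1 - a * b * q * q * q ^ (2 * j + s)) * ‖auxG q a b j s‖ := habs
    _ ≤ q ^ (s + 1) * 1 * ‖auxG q a b j s‖ := by
        apply mul_le_mul_of_nonneg_right _ (norm_nonneg _)
        apply mul_le_mul_of_nonneg_left _ (by positivity)
        linarith
    _ = q ^ (s + 1) * ‖auxG q a b j s‖ := by ring

include hq0 hq1 hγ0 hγ1 in
lemma auxG_summable (j : ℕ) : Summable (auxG q a b j) := by
  apply summable_of_ratio_norm_eventually_le (r := 1/2) (by norm_num)
  have ht : Filter.Tendsto (fun s : ℕ => q ^ s) Filter.atTop (nhds 0) :=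
    tendsto_pow_atTop_nhds_zero_of_lt_one (le_of_lt hq0) hq1
  have hev : ∀ᶠ s : ℕ in Filter.atTop, q ^ s < (1 - q) / 2 :=
    ht.eventually_lt_const (by linarith : (0:ℝ) < (1 - q) / 2)
  filter_upwards [hev] with s hs
  have hb := auxG_norm_ratio q a b hq0 hq1 hγ0 hγ1 j s
  have hle : q ^ (s + 1) / (1 - q) ≤ 1 / 2 := by
    rw [div_le_div_iff₀ (by linarith) (by norm_num)]
    have : q ^ (s + 1) ≤ q ^ s := by
      calc q ^ (s + 1) = q ^ s * q := by rw [pow_succ]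
        _ ≤ q ^ s * 1 := mul_le_mul_of_nonneg_left (le_of_lt hq1) (by positivity)
        _ = q ^ s := by ring
    nlinarith
  calc ‖auxG q a b j (s + 1)‖ ≤ (q ^ (s + 1) / (1 - q)) * ‖auxG q a b j s‖ := hb
    _ ≤ (1/2) * ‖auxG q a b j s‖ := mul_le_mul_of_nonneg_right hle (norm_nonneg _)

include hq0 hq1 hγ0 hγ1 in
lemma auxH_summable (j : ℕ) : Summable (auxH q a b j) := by
  rw [← summable_nat_add_iff (j + 1)]
  have : (fun m => auxH q a b j (m + (j + 1))) = auxG q a b j := by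
    funext m
    rw [show m + (j + 1) = j + 1 + m by omega, auxH_ge]
  rw [this]
  exact auxG_summable q a b hq0 hq1 hγ0 hγ1 j

include hq0 hq1 hα hγ0 hγ1 in
lemma aux_core (j : ℕ) : HasSum (fun m => auxW q a b m * auxB q a b j m) 0 := by
  have hH := auxH_summable q a b hq0 hq1 hγ0 hγ1 j
  have hsummand : (fun m => auxW q a b m * auxB q a b j m) =
      fun m => auxH q a b j (m + 1) - auxH q a b j m :=
    funext (auxT q a b hq0 hq1 hα j)
  have hS : Summable (fun m => auxW q a b m * auxB q a b j m) := by
    rw [hsummand]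
    exact ((summable_nat_add_iff 1).2 hH).sub hH
  rw [hS.hasSum_iff_tendsto_nat]
  have hps : ∀ N : ℕ, ∑ i ∈ Finset.range N, auxW q a b i * auxB q a b j i = auxH q a b j N := by
    intro N
    calc ∑ i ∈ Finset.range N, auxW q a b i * auxB q a b j i
        = ∑ i ∈ Finset.range N, (auxH q a b j (i + 1) - auxH q a b j i) := by
          apply Finset.sum_congr rfl
          intro i _
          exact auxT q a b hq0 hq1 hα j i
      _ = auxH q a b j N - auxH q a b j 0 := Finset.sum_range_sub _ N
      _ = auxH q a b j N := by rw [auxH_le q a b j 0 (by omega)]; ring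
  simp only [hps]
  exact hH.tendsto_atTop_zero
end

noncomputable def auxP (q a b : ℝ) (j : ℕ) : Polynomial ℝ :=
  ∏ i ∈ Finset.range j,
    (Polynomial.C (1 + a * b * q ^ (2 * i + 1)) - Polynomial.C (q ^ i) * Polynomial.X)

noncomputable def auxμ (q a b : ℝ) (m : ℕ) : ℝ := q ^ (-(m : ℤ)) + a * b * q ^ (m + 1)

lemma auxB_eval (q a b : ℝ) (hq : q ≠ 0) (j m : ℕ) :
    auxB q a b j m = (auxP q a b j).eval (auxμ q a b m) := by
  rw [auxB, auxP, qPoch, qPoch, ← Finset.prod_mul_distrib, Polynomial.eval_prod]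
  apply Finset.prod_congr rfl
  intro i _
  simp only [Polynomial.eval_sub, Polynomial.eval_mul, Polynomial.eval_C, Polynomial.eval_X]
  have hkey : (q : ℝ) ^ (-(m : ℤ)) * (a * b * q ^ (m + 1)) = a * b * q := by
    rw [zpow_neg, zpow_natCast, pow_succ]
    field_simp
  rw [auxμ, show 2 * i + 1 = (i + i) + 1 by omega, pow_succ, pow_add]
  linear_combination (q ^ i * q ^ i) * hkey

lemma auxP_factor_ne (q a b : ℝ) (hq : q ≠ 0) (i : ℕ) :
    (Polynomial.C (1 + a * b * q ^ (2 * i + 1)) - Polynomial.C (q ^ i) * Polynomial.X) ≠ 0 ∧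
    (Polynomial.C (1 + a * b * q ^ (2 * i + 1)) - Polynomial.C (q ^ i) * Polynomial.X).natDegree
      = 1 := by
  have heq : (Polynomial.C (1 + a * b * q ^ (2 * i + 1)) - Polynomial.C (q ^ i) * Polynomial.X)
      = Polynomial.C (-(q ^ i)) * Polynomial.X + Polynomial.C (1 + a * b * q ^ (2 * i + 1)) := by
    rw [map_neg]; ring
  have hd : (Polynomial.C (1 + a * b * q ^ (2 * i + 1)) -
      Polynomial.C (q ^ i) * Polynomial.X).natDegree = 1 := by
    rw [heq]
    exact Polynomial.natDegree_linear (by simpa using pow_ne_zero i hq)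
  refine ⟨fun h => ?_, hd⟩
  rw [h] at hd
  simp at hd

lemma auxP_ne_zero (q a b : ℝ) (hq : q ≠ 0) (j : ℕ) : auxP q a b j ≠ 0 := by
  rw [auxP, Finset.prod_ne_zero_iff]
  exact fun i _ => (auxP_factor_ne q a b hq i).1

lemma auxP_natDegree (q a b : ℝ) (hq : q ≠ 0) (j : ℕ) : (auxP q a b j).natDegree = j := by
  rw [auxP, Polynomial.natDegree_prod _ _ (fun i _ => (auxP_factor_ne q a b hq i).1),
    Finset.sum_congr rfl (fun i _ => (auxP_factor_ne q a b hq i).2), Finset.sum_const,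
    smul_eq_mul, mul_one, Finset.card_range]

lemma aux_master (q a b : ℝ) (hq0 : 0 < q) (hq1 : q < 1) (hα : a * b * q ≠ 1)
    (hγ0 : 0 < a * b * q * q) (hγ1 : a * b * q * q < 1) :
    ∀ N (p : Polynomial ℝ), p.natDegree ≤ N →
      HasSum (fun m => auxW q a b m * p.eval (auxμ q a b m)) 0 := by
  have hq : q ≠ 0 := hq0.ne'
  intro N
  induction N with
  | zero =>
      intro p hp
      obtain ⟨c, rfl⟩ := Polynomial.natDegree_eq_zero.mp (Nat.le_zero.mp hp)
      have h0 := aux_core q a b hq0 hq1 hα hγ0 hγ1 0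
      have heq : (fun m => auxW q a b m * (Polynomial.C c).eval (auxμ q a b m)) =
          fun m => c * (auxW q a b m * auxB q a b 0 m) := by
        funext m
        simp only [auxB, qPoch_zero, Polynomial.eval_C, one_mul]
        ring
      rw [heq]
      simpa using h0.mul_left c
  | succ N ih =>
      intro p hp
      by_cases hle : p.natDegree ≤ N
      · exact ih p hle
      · have hdeg : p.natDegree = N + 1 := by omega
        have hp0 : p ≠ 0 := fun h => by rw [h] at hdeg; simp at hdeg
        have hPne := auxP_ne_zero q a b hq (N + 1)
        have hPlc : (auxP q a b (N + 1)).leadingCoeff ≠ 0 :=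
          Polynomial.leadingCoeff_ne_zero.mpr hPne
        set c := p.leadingCoeff / (auxP q a b (N + 1)).leadingCoeff with hc
        have hcne : c ≠ 0 := div_ne_zero (Polynomial.leadingCoeff_ne_zero.mpr hp0) hPlc
        have hdegq : (Polynomial.C c * auxP q a b (N + 1)).degree = p.degree := by
          rw [Polynomial.degree_C_mul hcne, Polynomial.degree_eq_natDegree hp0,
            Polynomial.degree_eq_natDegree hPne, auxP_natDegree q a b hq, hdeg]
        have hlcq : (Polynomial.C c * auxP q a b (N + 1)).leadingCoeff = p.leadingCoeff := by
          rw [Polynomial.leadingCoeff_mul, Polynomial.leadingCoeff_C, hc,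
            div_mul_cancel₀ _ hPlc]
        have hlt := Polynomial.degree_sub_lt hdegq.symm hp0 hlcq.symm
        have hrd : (p - Polynomial.C c * auxP q a b (N + 1)).natDegree ≤ N := by
          by_cases hr0 : p - Polynomial.C c * auxP q a b (N + 1) = 0
          · simp [hr0]
          · have h := Polynomial.natDegree_lt_natDegree hr0 hlt
            omega
        have h1 := ih _ hrd
        have h2 : HasSum (fun m => auxW q a b m *
            (Polynomial.C c * auxP q a b (N + 1)).eval (auxμ q a b m)) 0 := by
          have h0 := aux_core q a b hq0 hq1 hα hγ0 hγ1 (N + 1)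
          have heq : (fun m => auxW q a b m *
              (Polynomial.C c * auxP q a b (N + 1)).eval (auxμ q a b m)) =
              fun m => c * (auxW q a b m * auxB q a b (N + 1) m) := by
            funext m
            rw [Polynomial.eval_mul, Polynomial.eval_C, auxB_eval q a b hq]
            ring
          rw [heq]
          simpa using h0.mul_left c
        have hpr : p = Polynomial.C c * auxP q a b (N + 1) +
            (p - Polynomial.C c * auxP q a b (N + 1)) := by ring
        have hfin := h2.add h1
        rw [show (0:ℝ) = 0 + 0 by ring]
        have heq2 : (fun m => auxW q a b m * p.eval (auxμ q a b m)) =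
            fun m => auxW q a b m * (Polynomial.C c * auxP q a b (N + 1)).eval (auxμ q a b m)
              + auxW q a b m *
                (p - Polynomial.C c * auxP q a b (N + 1)).eval (auxμ q a b m) := by
          funext m
          conv_lhs => rw [hpr]
          simp only [Polynomial.eval_add]
          ring
        rw [heq2]
        exact hfin

lemma auxμ_comm (q a b : ℝ) (m : ℕ) : auxμ q b a m = auxμ q a b m := by
  rw [auxμ, auxμ]; ring

lemma dual_eval (q A B C' : ℝ) (hq : q ≠ 0) (n m : ℕ) :
    dualBigQJacobi q A B C' n m =
      (∑ k ∈ Finset.range (n + 1), Polynomial.C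
          (qPoch q (q ^ (-(n : ℤ))) k /
              (qPoch q (A * q) k * qPoch q (A * B * q / C') k * qPoch q q k) *
            (A * q ^ (n + 1) / C') ^ k) * auxP q A B k).eval (auxμ q A B m) := by
  rw [Polynomial.eval_finset_sum, dualBigQJacobi]
  apply Finset.sum_congr rfl
  intro k _
  rw [Polynomial.eval_mul, Polynomial.eval_C, ← auxB_eval q A B hq k m, auxB]
  ring

theorem dualBigQJacobi_mutual_orthogonality
    (q a b c : ℝ) (hq0 : 0 < q) (hq1 : q < 1)
    (ha0 : 0 < a) (ha1 : a < q⁻¹) (hb0 : 0 < b) (hb1 : b < q⁻¹) (hc : c < 0)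
    (n n' : ℕ) :
    Summable (fun m : ℕ =>
      |(-1 : ℝ) ^ m * ((1 - a * b * q ^ (2 * m + 1)) * qPoch q (a * b * q) m /
            ((1 - a * b * q) * qPoch q q m)) * q ^ (m * (m - 1) / 2) *
        dualBigQJacobi q a b c n m * dualBigQJacobi q b a (a * b / c) n' m|) ∧
    ∑' m : ℕ,
        (-1 : ℝ) ^ m * ((1 - a * b * q ^ (2 * m + 1)) * qPoch q (a * b * q) m /
              ((1 - a * b * q) * qPoch q q m)) * q ^ (m * (m - 1) / 2) *
          dualBigQJacobi q a b c n m * dualBigQJacobi q b a (a * b / c) n' m = 0 := by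

  by_cases hα : a * b * q = 1
  · have hzero : ∀ m : ℕ, (-1 : ℝ) ^ m * ((1 - a * b * q ^ (2 * m + 1)) *
        qPoch q (a * b * q) m / ((1 - a * b * q) * qPoch q q m)) * q ^ (m * (m - 1) / 2) *
        dualBigQJacobi q a b c n m * dualBigQJacobi q b a (a * b / c) n' m = 0 := by
      intro m
      rw [show (1 : ℝ) - a * b * q = 0 by rw [hα]; ring, zero_mul, div_zero]
      ring
    constructor
    · simp only [hzero]
      simpa using summable_zero
    · simp only [hzero]
      exact tsum_zero
  · have hq : q ≠ 0 := hq0.ne'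
    have haq : a * q < 1 := by
      have h := mul_lt_mul_of_pos_right ha1 hq0
      rwa [inv_mul_cancel₀ hq] at h
    have hbq : b * q < 1 := by
      have h := mul_lt_mul_of_pos_right hb1 hq0
      rwa [inv_mul_cancel₀ hq] at h
    have hγ0 : 0 < a * b * q * q := by positivity
    have hγ1 : a * b * q * q < 1 := by
      have h1 : a * q * (b * q) < 1 * 1 := by
        apply mul_lt_mul'' haq hbq (by positivity) (by positivity)
      nlinarith [h1]
    obtain ⟨P1, hP1⟩ : ∃ P : Polynomial ℝ, ∀ m,
        dualBigQJacobi q a b c n m = P.eval (auxμ q a b m) :=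
      ⟨_, fun m => dual_eval q a b c hq n m⟩
    obtain ⟨P2, hP2⟩ : ∃ P : Polynomial ℝ, ∀ m,
        dualBigQJacobi q b a (a * b / c) n' m = P.eval (auxμ q a b m) :=
      ⟨_, fun m => by rw [dual_eval q b a (a * b / c) hq n' m, auxμ_comm]⟩
    have hmaster := aux_master q a b hq0 hq1 hα hγ0 hγ1 ((P1 * P2).natDegree) (P1 * P2) le_rfl
    have hfeq : ∀ m : ℕ, (-1 : ℝ) ^ m * ((1 - a * b * q ^ (2 * m + 1)) *
        qPoch q (a * b * q) m / ((1 - a * b * q) * qPoch q q m)) * q ^ (m * (m - 1) / 2) *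
        dualBigQJacobi q a b c n m * dualBigQJacobi q b a (a * b / c) n' m =
        auxW q a b m * (P1 * P2).eval (auxμ q a b m) := by
      intro m
      rw [Polynomial.eval_mul, ← hP1 m, ← hP2 m, auxW]
      ring
    constructor
    · simp only [hfeq]
      exact summable_abs_iff.mpr hmaster.summable
    · simp only [hfeq]
      exact hmaster.tsum_eq
end

section
/- Let 0 < q < 1 and let a, b, c be nonzero real numbers such that all denominators below are nonzero (e.g. 0 < a < q^{-1}, 0 < b < q^{-1}, c < 0). Then the dual big q-Jacobi polynomials satisfy the symmetry property D_n(μ(m);a,b,c|q) = D_n(μ(m);ab/c,c,b|q) for all m, n ∈ ℕ. -/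
open scoped BigOperators

theorem dualBigQJacobi_symmetry
    (q a b c : ℝ) (hq0 : 0 < q) (hq1 : q < 1)
    (ha : a ≠ 0) (hb : b ≠ 0) (hc : c ≠ 0)
    (hden : ∀ k : ℕ, qPoch q (a * q) k ≠ 0 ∧ qPoch q (a * b * q / c) k ≠ 0 ∧
      qPoch q q k ≠ 0)
    (m n : ℕ) :
    dualBigQJacobi q a b c n m = dualBigQJacobi q (a * b / c) c b n m := by
  unfold dualBigQJacobi
  refine Finset.sum_congr rfl fun k _ => ?_
  have h1 : a * b / c * c = a * b := by field_simp
  have h2 : a * b * q / b = a * q := by field_simp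
  have h4 : a * b / c * q = a * b * q / c := by ring
  have h3 : a * b / c * q ^ (n + 1) / b = a * q ^ (n + 1) / c := by
    field_simp
  rw [h1, h2, h3, h4]
  ring
end
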